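/- arXiv:2010.15268 — 5 statements merged into one kernel-verified Lean document; each statement's English description precedes it below -/
import Mathlib

section
/- (Multiple-fixed-point counterexample: API has two fixed points.) Define T : [0,1] → ℝ by T(ρ) = 1 if 3ρ − 1 > −ρ and T(ρ) = 0 otherwise. Then T(ρ) = 1 if and only if ρ > 1/4; in particular T(0) = 0 and T(1) = 1, so both deterministic policies are fixed points of T; moreover T(T(ρ)) = T(ρ) for every ρ ∈ [0,1], so approximate policy iteration converges after one round to the fixed point 0 if ρ ≤ 1/4 and to the fixed point 1 if ρ > 1/4. -/
/-- One round of approximate policy iteration on the multiple-fixed-point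
counterexample: the evaluation step produces θ* = (2ρ, −ρ, 3ρ−1) and
greedification compares the look-ahead value 3ρ−1 of the right action against
−ρ for the left action (ties broken left); output 1 = right, 0 = left. -/
noncomputable def multiAPI (ρ : ℝ) : ℝ := if 3 * ρ - 1 > -ρ then 1 else 0

lemma multiAPI_eq (ρ : ℝ) : multiAPI ρ = if ρ > 1/4 then 1 else 0 := by
  unfold multiAPI
  congr 1
  apply propext
  constructor <;> intro h <;> linarith

theorem multi_two_fixed_points :
    (∀ ρ ∈ Set.Icc (0:ℝ) 1, (multiAPI ρ = 1 ↔ ρ > 1/4)) ∧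
    multiAPI 0 = 0 ∧ multiAPI 1 = 1 ∧
    (∀ ρ ∈ Set.Icc (0:ℝ) 1, multiAPI (multiAPI ρ) = multiAPI ρ) ∧
    (∀ ρ ∈ Set.Icc (0:ℝ) 1, (ρ ≤ 1/4 → multiAPI ρ = 0) ∧ (ρ > 1/4 → multiAPI ρ = 1)) := by
  refine ⟨?_, ?_, ?_, ?_, ?_⟩
  · intro ρ _
    rw [multiAPI_eq]
    split
    · next h => exact ⟨fun _ => h, fun _ => rfl⟩
    · next h => exact ⟨fun h01 => absurd h01 (by norm_num), fun hh => absurd hh h⟩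
  · simp [multiAPI_eq]
  · simp [multiAPI_eq]; norm_num
  · intro ρ _
    rw [multiAPI_eq ρ]
    split <;> simp [multiAPI_eq] <;> norm_num
  · intro ρ _
    rw [multiAPI_eq]
    constructor <;> intro h <;> split <;> first | rfl | linarith
end

section
/- (Proposition 1(i).) Consider a finite episodic MDP and a value-function approximator v̂ : Θ → (S → ℝ) with parameter space Θ = ℝⁿ. Assume that for every deterministic policy π there exists a unique parameter θ*_π ∈ ℝⁿ with ∑_{s∈S} μ_π(s)·(v̂(s;θ*_π) − v_π(s))² = 0. Let θ̃ be a fixed point of approximate policy iteration, i.e., with π = Greedy(θ̃) one has v̂(·;θ̃) = v̂(·;θ*_π). Then θ̃ is also a fixed point of approximate value iteration: θ̃ minimizes over θ ∈ ℝⁿ the objective ∑_{s∈S} μ_π(s)·(v̂(s;θ) − B*v̂(s;θ̃))², with minimum value 0, where π = Greedy(θ̃). -/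
open Matrix BigOperators

/-- Transition matrix of the Markov chain induced by deterministic policy `π`. -/
noncomputable def polMat {S A : Type*} [Fintype S] (p : S → A → S → ℝ) (π : S → A) :
    Matrix S S ℝ := fun s s' => p s (π s) s'

/-- Expected one-step reward vector of deterministic policy `π`. -/
noncomputable def polRew {S A : Type*} (r : S → A → ℝ) (π : S → A) : S → ℝ :=
  fun s => r s (π s)

/-- True value function of deterministic policy `π`: v_π = (I − P_π)⁻¹ r_π. -/
noncomputable def polVal {S A : Type*} [Fintype S] [DecidableEq S]
    (p : S → A → S → ℝ) (r : S → A → ℝ) (π : S → A) : S → ℝ :=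
  (1 - polMat p π)⁻¹ *ᵥ polRew r π

/-- On-policy weights (expected visit counts): μ_π = ν₀ᵀ (I − P_π)⁻¹. -/
noncomputable def polMu {S A : Type*} [Fintype S] [DecidableEq S]
    (p : S → A → S → ℝ) (ν₀ : S → ℝ) (π : S → A) : S → ℝ :=
  ν₀ ᵥ* (1 - polMat p π)⁻¹

/-- Bellman optimality operator: B*v(s) = max_a [r(s,a) + Σ_{s'} p(s'|s,a) v(s')]. -/
noncomputable def bellOpt {S A : Type*} [Fintype S] [Fintype A] [Nonempty A]
    (p : S → A → S → ℝ) (r : S → A → ℝ) (v : S → ℝ) : S → ℝ :=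
  fun s => ⨆ a : A, (r s a + ∑ s', p s a s' * v s')

/-- Proposition 1(i): in a finite episodic MDP in which, for each deterministic
policy, there is a unique parameter achieving zero on-policy weighted evaluation
error, every fixed point of approximate policy iteration is also a fixed point of
approximate value iteration. -/
theorem api_fixed_point_is_avi_fixed_point
    {S A : Type*} [Fintype S] [Fintype A] [DecidableEq S] [Nonempty A]
    (n : ℕ) (p : S → A → S → ℝ) (r : S → A → ℝ) (ν₀ : S → ℝ)
    (hp_nonneg : ∀ s a s', 0 ≤ p s a s')
    (hp_sub : ∀ s a, ∑ s', p s a s' ≤ 1)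
    (hν₀_nonneg : ∀ s, 0 ≤ ν₀ s) (hν₀_sum : ∑ s, ν₀ s = 1)
    (hunit : ∀ π : S → A, IsUnit (1 - polMat p π))
    (htrans : ∀ π : S → A, HasSum (fun t : ℕ => polMat p π ^ t) (1 - polMat p π)⁻¹)
    (vhat : (Fin n → ℝ) → S → ℝ)
    (hzero : ∀ π : S → A, ∃! θ : Fin n → ℝ,
      ∑ s, polMu p ν₀ π s * (vhat θ s - polVal p r π s) ^ 2 = 0)
    (θtil : Fin n → ℝ) (π : S → A)
    (hgreedy : ∀ s a, r s a + ∑ s', p s a s' * vhat θtil s'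
      ≤ r s (π s) + ∑ s', p s (π s) s' * vhat θtil s')
    (hfix : ∃ θstar : Fin n → ℝ,
      (∑ s, polMu p ν₀ π s * (vhat θstar s - polVal p r π s) ^ 2 = 0) ∧
      vhat θtil = vhat θstar) :
    (∑ s, polMu p ν₀ π s * (vhat θtil s - bellOpt p r (vhat θtil) s) ^ 2 = 0) ∧
    (∀ θ : Fin n → ℝ,
      ∑ s, polMu p ν₀ π s * (vhat θtil s - bellOpt p r (vhat θtil) s) ^ 2
        ≤ ∑ s, polMu p ν₀ π s * (vhat θ s - bellOpt p r (vhat θtil) s) ^ 2) := by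
  classical
  obtain ⟨θs, hθs, hvθ⟩ := hfix
  set P : Matrix S S ℝ := polMat p π with hPdef
  set μ : S → ℝ := polMu p ν₀ π with hμdef
  set v : S → ℝ := polVal p r π with hvdef
  have hdet : IsUnit (1 - P).det := (Matrix.isUnit_iff_isUnit_det _).mp (hunit π)
  have hpow : ∀ (t : ℕ) (i j : S), 0 ≤ (P ^ t) i j := by
    intro t
    induction t with
    | zero => intro i j; rw [pow_zero]; by_cases h : i = j <;> simp [Matrix.one_apply, h]
    | succ t ih =>
      intro i j
      rw [pow_succ, Matrix.mul_apply]
      exact Finset.sum_nonneg fun k _ => mul_nonneg (ih i k) (hp_nonneg k (π k) j)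
  have hPnn : ∀ i j, 0 ≤ P i j := by
    intro i j; simpa using hpow 1 i j
  have hinvnn : ∀ i j, 0 ≤ (1 - P)⁻¹ i j := by
    intro i j
    have h1 : HasSum (fun t : ℕ => ((P ^ t : Matrix S S ℝ) : S → S → ℝ))
        (((1 - P)⁻¹ : Matrix S S ℝ) : S → S → ℝ) := htrans π
    exact (Pi.hasSum.mp (Pi.hasSum.mp h1 i) j).nonneg fun t => hpow t i j
  have hμnn : ∀ s, 0 ≤ μ s := by
    intro s
    rw [hμdef, polMu, Matrix.vecMul, dotProduct]
    exact Finset.sum_nonneg fun t _ => mul_nonneg (hν₀_nonneg t) (hinvnn t s)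
  have hμP : μ ᵥ* (1 - P) = ν₀ := by
    rw [hμdef, polMu, Matrix.vecMul_vecMul, Matrix.nonsing_inv_mul _ hdet, Matrix.vecMul_one]
  -- support closure
  have hsupp : ∀ s s', 0 < μ s → μ s' = 0 → P s s' = 0 := by
    intro s s' hs hs'
    have h1 : ∑ t, μ t * P t s' = μ s' - ν₀ s' := by
      have h := congrFun hμP s'
      rw [Matrix.vecMul, dotProduct] at h
      simp only [Matrix.sub_apply, Matrix.one_apply, mul_sub] at h
      rw [Finset.sum_sub_distrib] at h
      have h2 : ∑ t, μ t * (if t = s' then (1:ℝ) else 0) = μ s' := by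
        simp [mul_ite]
      linarith
    have h3 : μ s * P s s' ≤ ∑ t, μ t * P t s' :=
      Finset.single_le_sum (f := fun t => μ t * P t s')
        (fun t _ => mul_nonneg (hμnn t) (hPnn t s')) (Finset.mem_univ s)
    have h4 : μ s * P s s' ≤ 0 := by
      rw [h1, hs'] at h3; linarith [hν₀_nonneg s']
    have h5 : 0 ≤ μ s * P s s' := mul_nonneg (hμnn s) (hPnn s s')
    have h6 : μ s * P s s' = 0 := le_antisymm h4 h5
    exact (mul_eq_zero.mp h6).resolve_left (ne_of_gt hs)
  -- Bellman equation for v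
  have hbell : ∀ s, v s = r s (π s) + ∑ s', P s s' * v s' := by
    intro s
    have h : (1 - P) *ᵥ v = polRew r π := by
      rw [hvdef, polVal, Matrix.mulVec_mulVec, Matrix.mul_nonsing_inv _ hdet,
        Matrix.one_mulVec]
    have h2 := congrFun h s
    rw [Matrix.mulVec, dotProduct] at h2
    simp only [Matrix.sub_apply, Matrix.one_apply, sub_mul] at h2
    rw [Finset.sum_sub_distrib] at h2
    have h3 : ∑ s', (if s = s' then (1:ℝ) else 0) * v s' = v s := by
      simp [ite_mul]
    rw [h3] at h2
    have : polRew r π s = r s (π s) := rfl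
    rw [this] at h2
    linarith
  -- vhat θtil = v on support
  have hval : ∀ s, 0 < μ s → vhat θtil s = v s := by
    intro s hs
    have hnn : ∀ t ∈ Finset.univ, (0:ℝ) ≤ μ t * (vhat θs t - v t) ^ 2 :=
      fun t _ => mul_nonneg (hμnn t) (sq_nonneg _)
    have h := (Finset.sum_eq_zero_iff_of_nonneg hnn).mp hθs s (Finset.mem_univ s)
    have h2 : (vhat θs s - v s) ^ 2 = 0 := by
      rcases mul_eq_zero.mp h with h' | h'
      · exact absurd h' (ne_of_gt hs)
      · exact h'
    have h3 : vhat θs s = v s := by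
      have := pow_eq_zero_iff (n := 2) (by norm_num) |>.mp h2
      linarith
    rw [hvθ]; exact h3
  -- bellOpt equals the π-action value
  have hB : ∀ s, bellOpt p r (vhat θtil) s = r s (π s) + ∑ s', P s s' * vhat θtil s' := by
    intro s
    rw [bellOpt]
    apply le_antisymm
    · exact ciSup_le fun a => hgreedy s a
    · exact le_ciSup (f := fun a : A => r s a + ∑ s', p s a s' * vhat θtil s')
        (Set.Finite.bddAbove (Set.finite_range _)) (π s)
  -- residual vanishes on support
  have hres : ∀ s, 0 < μ s → vhat θtil s - bellOpt p r (vhat θtil) s = 0 := by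
    intro s hs
    rw [hB s, hval s hs, hbell s]
    have : ∑ s', P s s' * v s' = ∑ s', P s s' * vhat θtil s' := by
      apply Finset.sum_congr rfl
      intro s' _
      rcases eq_or_lt_of_le (hμnn s') with h' | h'
      · rw [hsupp s s' hs h'.symm]; ring
      · rw [hval s' h']
    rw [this]; ring
  have hzero' : ∑ s, μ s * (vhat θtil s - bellOpt p r (vhat θtil) s) ^ 2 = 0 := by
    apply Finset.sum_eq_zero
    intro s _
    rcases eq_or_lt_of_le (hμnn s) with h' | h'
    · rw [← h']; ring
    · rw [hres s h']; ring
  refine ⟨hzero', fun θ => ?_⟩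
  rw [hzero']
  exact Finset.sum_nonneg fun s _ => mul_nonneg (hμnn s) (sq_nonneg _)
end

section
/- (Proposition 1(ii).) Consider a finite episodic MDP and a linear value-function approximator v̂(s;θ) = θ · x(s) for fixed features x : S → ℝⁿ. Assume that for every deterministic policy π there exists a unique parameter θ*_π ∈ ℝⁿ with ∑_{s∈S} μ_π(s)·(v̂(s;θ*_π) − v_π(s))² = 0. Let θ̃ be a fixed point of approximate value iteration, i.e., with π = Greedy(θ̃), θ̃ minimizes over θ ∈ ℝⁿ the objective ∑_{s∈S} μ_π(s)·(v̂(s;θ) − B*v̂(s;θ̃))². Then v̂(·;θ̃) = v̂(·;θ*_π), i.e., θ̃ is also a fixed point of approximate policy iteration. -/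
open Matrix BigOperators

/-- Linear value-function approximator v̂(s;θ) = θ · x(s). -/
noncomputable def linVhat {S : Type*} [Fintype S] (n : ℕ) (x : S → Fin n → ℝ)
    (θ : Fin n → ℝ) : S → ℝ := fun s => θ ⬝ᵥ x s

section Aux

variable {S : Type*} [Fintype S] [DecidableEq S]

lemma aux_pow_entry_nonneg {M : Matrix S S ℝ} (hM : ∀ i j, 0 ≤ M i j) :
    ∀ (t : ℕ) (i j : S), 0 ≤ (M ^ t) i j := by
  intro t
  induction t with
  | zero =>
    intro i j
    simp only [pow_zero, Matrix.one_apply]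
    split <;> norm_num
  | succ t ih =>
    intro i j
    rw [pow_succ, Matrix.mul_apply]
    exact Finset.sum_nonneg fun k _ => mul_nonneg (ih i k) (hM k j)

/-- monotonicity of mulVec for entrywise-nonnegative matrices -/
lemma aux_mulVec_mono {M : Matrix S S ℝ} (hM : ∀ i j, 0 ≤ M i j)
    {u v : S → ℝ} (huv : ∀ s, u s ≤ v s) (s : S) : (M *ᵥ u) s ≤ (M *ᵥ v) s := by
  simp only [Matrix.mulVec, dotProduct]
  exact Finset.sum_le_sum fun j _ => mul_le_mul_of_nonneg_left (huv j) (hM s j)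

/-- if |w| ≤ M|w| pointwise with M nonneg transient, then w = 0 -/
lemma aux_transient_zero {M : Matrix S S ℝ} (hM : ∀ i j, 0 ≤ M i j)
    (htend : ∀ i j : S, Filter.Tendsto (fun t : ℕ => (M ^ t) i j) Filter.atTop (nhds 0))
    {w : S → ℝ} (hw : ∀ s, |w s| ≤ (M *ᵥ fun s' => |w s'|) s) : ∀ s, w s = 0 := by
  have key : ∀ (t : ℕ) (s : S), |w s| ≤ ((M ^ t) *ᵥ fun s' => |w s'|) s := by
    intro t
    induction t with
    | zero => intro s; simp [Matrix.mulVec, dotProduct, Matrix.one_apply]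
    | succ t ih =>
      intro s
      calc |w s| ≤ (M *ᵥ fun s' => |w s'|) s := hw s
        _ ≤ (M *ᵥ fun s' => ((M ^ t) *ᵥ fun s'' => |w s''|) s') s :=
            aux_mulVec_mono hM (fun s' => ih s') s
        _ = ((M ^ (t+1)) *ᵥ fun s'' => |w s''|) s := by
            rw [show (fun s' => ((M ^ t) *ᵥ fun s'' => |w s''|) s') = ((M ^ t) *ᵥ fun s'' => |w s''|) from rfl,
              Matrix.mulVec_mulVec, ← pow_succ']
  intro s
  have htend2 : Filter.Tendsto (fun t : ℕ => ((M ^ t) *ᵥ fun s' => |w s'|) s)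
      Filter.atTop (nhds 0) := by
    have : Filter.Tendsto (fun t : ℕ => ∑ s', (M ^ t) s s' * |w s'|)
        Filter.atTop (nhds (∑ s' : S, 0)) := by
      apply tendsto_finset_sum
      intro s' _
      simpa using (htend s s').mul_const |w s'|
    simpa [Matrix.mulVec, dotProduct] using this
  have : |w s| ≤ 0 :=
    le_of_tendsto_of_tendsto tendsto_const_nhds htend2
      (Filter.Eventually.of_forall fun t => key t s)
  exact abs_nonpos_iff.mp this

end Aux

/-- Proposition 1(ii): in a finite episodic MDP with a linear value-function
approximator in which, for each deterministic policy, there is a unique parameter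
achieving zero on-policy weighted evaluation error, every fixed point of
approximate value iteration is also a fixed point of approximate policy
iteration. -/
theorem avi_fixed_point_is_api_fixed_point
    {S A : Type*} [Fintype S] [Fintype A] [DecidableEq S] [Nonempty A]
    (n : ℕ) (p : S → A → S → ℝ) (r : S → A → ℝ) (ν₀ : S → ℝ) (x : S → Fin n → ℝ)
    (hp_nonneg : ∀ s a s', 0 ≤ p s a s')
    (hp_sub : ∀ s a, ∑ s', p s a s' ≤ 1)
    (hν₀_nonneg : ∀ s, 0 ≤ ν₀ s) (hν₀_sum : ∑ s, ν₀ s = 1)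
    (hunit : ∀ π : S → A, IsUnit (1 - polMat p π))
    (htrans : ∀ π : S → A, HasSum (fun t : ℕ => polMat p π ^ t) (1 - polMat p π)⁻¹)
    (hzero : ∀ π : S → A, ∃! θ : Fin n → ℝ,
      ∑ s, polMu p ν₀ π s * (linVhat n x θ s - polVal p r π s) ^ 2 = 0)
    (θtil : Fin n → ℝ) (π : S → A)
    (hgreedy : ∀ s a, r s a + ∑ s', p s a s' * linVhat n x θtil s'
      ≤ r s (π s) + ∑ s', p s (π s) s' * linVhat n x θtil s')
    (hAVIfix : ∀ θ : Fin n → ℝ,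
      ∑ s, polMu p ν₀ π s * (linVhat n x θtil s - bellOpt p r (linVhat n x θtil) s) ^ 2
        ≤ ∑ s, polMu p ν₀ π s * (linVhat n x θ s - bellOpt p r (linVhat n x θtil) s) ^ 2) :
    ∀ θstar : Fin n → ℝ,
      (∑ s, polMu p ν₀ π s * (linVhat n x θstar s - polVal p r π s) ^ 2 = 0) →
      linVhat n x θtil = linVhat n x θstar := by
  intro θstar hstar
  set M : Matrix S S ℝ := polMat p π with hM
  set μ : S → ℝ := polMu p ν₀ π with hμdef
  set v : S → ℝ := polVal p r π with hvdef
  set vh : S → ℝ := linVhat n x θtil with hvh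
  set vs : S → ℝ := linVhat n x θstar with hvs
  have hMnn : ∀ i j, 0 ≤ M i j := fun i j => hp_nonneg i (π i) j
  have hMrow : ∀ i, ∑ j, M i j ≤ 1 := fun i => hp_sub i (π i)
  have hdet : IsUnit (1 - M).det := (Matrix.isUnit_iff_isUnit_det _).mp (hunit π)
  -- entrywise HasSum for inverse
  have hentry : ∀ i j, HasSum (fun t : ℕ => (M ^ t) i j) ((1 - M)⁻¹ i j) :=
    fun i j => Pi.hasSum.1 (Pi.hasSum.1 (htrans π) i) j
  have hinv_nn : ∀ i j, 0 ≤ (1 - M)⁻¹ i j := by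
    intro i j
    have := (hentry i j).tsum_eq
    rw [← this]
    exact tsum_nonneg fun t => aux_pow_entry_nonneg hMnn t i j
  have hμnn : ∀ s, 0 ≤ μ s := by
    intro s
    rw [hμdef]
    simp only [polMu, Matrix.vecMul, dotProduct]
    exact Finset.sum_nonneg fun j _ => mul_nonneg (hν₀_nonneg j) (hinv_nn j s)
  -- balance equation μ = ν₀ + μ M
  have hbal : ∀ s, μ s = ν₀ s + ∑ s', μ s' * M s' s := by
    have h1 : μ ᵥ* (1 - M) = ν₀ := by
      rw [hμdef]
      show (ν₀ ᵥ* (1 - M)⁻¹) ᵥ* (1 - M) = ν₀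
      rw [Matrix.vecMul_vecMul, Matrix.nonsing_inv_mul _ hdet, Matrix.vecMul_one]
    rw [Matrix.vecMul_sub, Matrix.vecMul_one] at h1
    intro s
    have h3 := congrFun h1 s
    simp only [Pi.sub_apply, Matrix.vecMul, dotProduct] at h3
    linarith
  have hμM_le : ∀ s' s, μ s' * M s' s ≤ μ s := by
    intro s' s
    rw [hbal s]
    have : μ s' * M s' s ≤ ∑ σ, μ σ * M σ s :=
      Finset.single_le_sum (f := fun σ => μ σ * M σ s)
        (fun σ _ => mul_nonneg (hμnn σ) (hMnn σ s)) (Finset.mem_univ s')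
    linarith [hν₀_nonneg s]
  -- Bellman equation for v
  have hBellman : ∀ s, v s = polRew r π s + ∑ s', M s s' * v s' := by
    have h1 : (1 - M) *ᵥ v = polRew r π := by
      rw [hvdef]
      show (1 - M) *ᵥ ((1 - M)⁻¹ *ᵥ polRew r π) = polRew r π
      rw [Matrix.mulVec_mulVec, Matrix.mul_nonsing_inv _ hdet, Matrix.one_mulVec]
    rw [Matrix.sub_mulVec, Matrix.one_mulVec] at h1
    intro s
    have h3 := congrFun h1 s
    simp only [Pi.sub_apply, Matrix.mulVec, dotProduct] at h3
    linarith
  -- bellOpt coincides with the π-Bellman operator on vh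
  have hBopt : ∀ s, bellOpt p r vh s = polRew r π s + ∑ s', M s s' * vh s' := by
    intro s
    apply le_antisymm
    · exact ciSup_le fun a => hgreedy s a
    · exact le_ciSup (f := fun a => r s a + ∑ s', p s a s' * vh s')
        (Set.Finite.bddAbove (Set.finite_range _)) (π s)
  -- error function e and one-step image c
  set e : S → ℝ := fun s => vh s - v s with he
  set c : S → ℝ := fun s => ∑ s', M s s' * e s' with hc
  -- δ = vh - bellOpt vh = e - c
  have hdelta : ∀ s, vh s - bellOpt p r vh s = e s - c s := by
    intro s
    have h1 : e s - c s = (vh s - v s) - ∑ s', M s s' * (vh s' - v s') := rfl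
    rw [hBopt s, h1, hBellman s]
    have h2 : ∀ s' ∈ Finset.univ, M s s' * (vh s' - v s')
        = M s s' * vh s' - M s s' * v s' := fun s' _ => by ring
    rw [Finset.sum_congr rfl h2, Finset.sum_sub_distrib]
    ring
  -- θstar matches v on the support of μ
  have hsupp_star : ∀ s, 0 < μ s → vs s = v s := by
    intro s hs
    have hterm : ∀ σ ∈ Finset.univ, 0 ≤ μ σ * (vs σ - v σ) ^ 2 :=
      fun σ _ => mul_nonneg (hμnn σ) (sq_nonneg _)
    have := (Finset.sum_eq_zero_iff_of_nonneg hterm).mp hstar s (Finset.mem_univ s)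
    have h2 : (vs s - v s) ^ 2 = 0 := by
      rcases mul_eq_zero.mp this with h | h
      · exact absurd h (ne_of_gt hs)
      · exact h
    have := pow_eq_zero_iff (n := 2) (by norm_num) |>.mp h2
    linarith
  -- orthogonality in the direction η = θtil - θstar
  set η : Fin n → ℝ := θtil - θstar with hη
  have hdir : ∀ s, η ⬝ᵥ x s = vh s - vs s := by
    intro s
    rw [hη, hvh, hvs]
    simp [linVhat, sub_dotProduct]
  -- quadratic expansion: the AVI objective along θtil + t • η
  have horth : ∑ s, μ s * (e s - c s) * (η ⬝ᵥ x s) = 0 := by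
    set b : ℝ := ∑ s, μ s * (e s - c s) * (η ⬝ᵥ x s) with hb
    set aq : ℝ := ∑ s, μ s * (η ⬝ᵥ x s) ^ 2 with haq
    have haq_nn : 0 ≤ aq :=
      Finset.sum_nonneg fun s _ => mul_nonneg (hμnn s) (sq_nonneg _)
    have hkey : ∀ t : ℝ, 0 ≤ aq * t ^ 2 + 2 * b * t := by
      intro t
      have h := hAVIfix (θtil + t • η)
      have hexp : ∀ s, linVhat n x (θtil + t • η) s = vh s + t * (η ⬝ᵥ x s) := by
        intro s
        rw [hvh]
        simp [linVhat, add_dotProduct, smul_dotProduct, smul_eq_mul]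
      have hsum : (∑ s, μ s * (linVhat n x (θtil + t • η) s - bellOpt p r vh s) ^ 2)
          = ∑ s, (μ s * (vh s - bellOpt p r vh s) ^ 2
              + μ s * (η ⬝ᵥ x s) ^ 2 * t ^ 2 + 2 * (μ s * (e s - c s) * (η ⬝ᵥ x s)) * t) := by
        apply Finset.sum_congr rfl
        intro s _
        rw [hexp s, ← hdelta s]
        ring
      rw [hsum, Finset.sum_add_distrib, Finset.sum_add_distrib,
        ← Finset.sum_mul, ← Finset.sum_mul, ← Finset.mul_sum] at h
      rw [haq, hb]
      nlinarith [h]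
    have h1 := hkey (-b / (aq + 1))
    have haq1 : (0:ℝ) < aq + 1 := by linarith
    have h2 : aq * (-b / (aq + 1)) ^ 2 + 2 * b * (-b / (aq + 1))
        = -(b ^ 2 * (aq + 2)) / (aq + 1) ^ 2 := by
      field_simp
      ring
    rw [h2] at h1
    have h3 : b ^ 2 * (aq + 2) ≤ 0 := by
      by_contra hcon
      push_neg at hcon
      have := div_pos hcon (by positivity : (0:ℝ) < (aq + 1) ^ 2)
      rw [neg_div] at h1
      linarith
    have hb0 : b ^ 2 = 0 := by nlinarith [sq_nonneg b]
    exact pow_eq_zero_iff (n := 2) (by norm_num) |>.mp hb0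
  -- rewrite orthogonality with e instead of η·x (they agree on the support)
  have horth_e : ∑ s, μ s * (e s - c s) * e s = 0 := by
    rw [← horth]
    apply Finset.sum_congr rfl
    intro s _
    rcases eq_or_lt_of_le (hμnn s) with h | h
    · rw [← h]; ring
    · rw [hdir s, hsupp_star s h, he]
  -- Cauchy–Schwarz: ∑ μ c² ≤ ∑ μ e² - ∑ ν₀ e²
  have hCS : ∑ s, μ s * c s ^ 2 ≤ ∑ s, μ s * e s ^ 2 - ∑ s, ν₀ s * e s ^ 2 := by
    have hstep : ∀ s, μ s * c s ^ 2 ≤ μ s * ∑ s', M s s' * e s' ^ 2 := by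
      intro s
      apply mul_le_mul_of_nonneg_left _ (hμnn s)
      have hcs : (∑ s', Real.sqrt (M s s') * (Real.sqrt (M s s') * e s')) ^ 2
          ≤ (∑ s', Real.sqrt (M s s') ^ 2) * ∑ s', (Real.sqrt (M s s') * e s') ^ 2 :=
        Finset.sum_mul_sq_le_sq_mul_sq Finset.univ _ _
      have hrw1 : ∀ s', Real.sqrt (M s s') * (Real.sqrt (M s s') * e s') = M s s' * e s' := by
        intro s'
        rw [← mul_assoc, Real.mul_self_sqrt (hMnn s s')]
      have hrw2 : ∀ s', Real.sqrt (M s s') ^ 2 = M s s' := fun s' => Real.sq_sqrt (hMnn s s')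
      have hrw3 : ∀ s', (Real.sqrt (M s s') * e s') ^ 2 = M s s' * e s' ^ 2 := by
        intro s'
        rw [mul_pow, hrw2]
      simp_rw [hrw1, hrw2, hrw3] at hcs
      calc c s ^ 2 ≤ (∑ s', M s s') * ∑ s', M s s' * e s' ^ 2 := by rw [hc]; exact hcs
        _ ≤ 1 * ∑ s', M s s' * e s' ^ 2 := by
            apply mul_le_mul_of_nonneg_right (hMrow s)
            exact Finset.sum_nonneg fun s' _ => mul_nonneg (hMnn s s') (sq_nonneg _)
        _ = ∑ s', M s s' * e s' ^ 2 := one_mul _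
    calc ∑ s, μ s * c s ^ 2 ≤ ∑ s, μ s * ∑ s', M s s' * e s' ^ 2 :=
          Finset.sum_le_sum fun s _ => hstep s
      _ = ∑ s', (∑ s, μ s * M s s') * e s' ^ 2 := by
          simp_rw [Finset.mul_sum, Finset.sum_mul]
          rw [Finset.sum_comm]
          apply Finset.sum_congr rfl; intro s' _
          apply Finset.sum_congr rfl; intro s _; ring
      _ = ∑ s', (μ s' - ν₀ s') * e s' ^ 2 := by
          apply Finset.sum_congr rfl
          intro s' _
          have := hbal s'
          have h2 : ∑ s, μ s * M s s' = μ s' - ν₀ s' := by linarith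
          rw [h2]
      _ = ∑ s, μ s * e s ^ 2 - ∑ s, ν₀ s * e s ^ 2 := by
          rw [← Finset.sum_sub_distrib]
          apply Finset.sum_congr rfl; intro s _; ring
  -- hence ∑ μ (e - c)² ≤ 0, so e = c on the support of μ
  have hsq : ∑ s, μ s * (e s - c s) ^ 2 ≤ 0 := by
    have hnu_nn : 0 ≤ ∑ s, ν₀ s * e s ^ 2 :=
      Finset.sum_nonneg fun s _ => mul_nonneg (hν₀_nonneg s) (sq_nonneg _)
    have hexpand : ∑ s, μ s * (e s - c s) ^ 2
        = ∑ s, (μ s * c s ^ 2 - μ s * e s ^ 2 + 2 * (μ s * (e s - c s) * e s)) := by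
      apply Finset.sum_congr rfl; intro s _; ring
    rw [hexpand, Finset.sum_add_distrib, Finset.sum_sub_distrib, ← Finset.mul_sum, horth_e,
      mul_zero]
    linarith
  have hec : ∀ s, 0 < μ s → e s = c s := by
    intro s hs
    have hterm : ∀ σ ∈ Finset.univ, 0 ≤ μ σ * (e σ - c σ) ^ 2 :=
      fun σ _ => mul_nonneg (hμnn σ) (sq_nonneg _)
    have hzero' : ∑ s, μ s * (e s - c s) ^ 2 = 0 :=
      le_antisymm hsq (Finset.sum_nonneg hterm)
    have := (Finset.sum_eq_zero_iff_of_nonneg hterm).mp hzero' s (Finset.mem_univ s)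
    rcases mul_eq_zero.mp this with h | h
    · exact absurd h (ne_of_gt hs)
    · have := pow_eq_zero_iff (n := 2) (by norm_num) |>.mp h
      linarith
  -- supp closure: μ s > 0 and M s s' > 0 implies μ s' > 0
  have hclosed : ∀ s s', 0 < μ s → 0 < M s s' → 0 < μ s' := by
    intro s s' hs hM'
    calc (0:ℝ) < μ s * M s s' := mul_pos hs hM'
      _ ≤ μ s' := hμM_le s s'
  -- truncated error is subharmonic
  set et : S → ℝ := fun s => if 0 < μ s then e s else 0 with het
  have hsub : ∀ s, |et s| ≤ (M *ᵥ fun s' => |et s'|) s := by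
    intro s
    by_cases hs : 0 < μ s
    · have h1 : et s = ∑ s', M s s' * et s' := by
        rw [het]
        simp only [hs, if_true]
        rw [hec s hs, hc]
        apply Finset.sum_congr rfl
        intro s' _
        rcases eq_or_lt_of_le (hMnn s s') with hM' | hM'
        · rw [← hM']; ring
        · rw [if_pos (hclosed s s' hs hM')]
      rw [h1]
      calc |∑ s', M s s' * et s'| ≤ ∑ s', |M s s' * et s'| := Finset.abs_sum_le_sum_abs _ _
        _ = ∑ s', M s s' * |et s'| := by
            apply Finset.sum_congr rfl
            intro s' _
            rw [abs_mul, abs_of_nonneg (hMnn s s')]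
        _ = (M *ᵥ fun s' => |et s'|) s := by simp [Matrix.mulVec, dotProduct]
    · have : et s = 0 := by rw [het]; simp [hs]
      rw [this, abs_zero]
      simp only [Matrix.mulVec, dotProduct]
      exact Finset.sum_nonneg fun s' _ => mul_nonneg (hMnn s s') (abs_nonneg _)
  have htend : ∀ i j : S, Filter.Tendsto (fun t : ℕ => (M ^ t) i j) Filter.atTop (nhds 0) :=
    fun i j => (hentry i j).summable.tendsto_atTop_zero
  have het_zero : ∀ s, et s = 0 := aux_transient_zero hMnn htend hsub
  -- so e vanishes on the support, θtil achieves zero error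
  have htil_zero : ∑ s, μ s * (vh s - v s) ^ 2 = 0 := by
    apply Finset.sum_eq_zero
    intro s _
    rcases eq_or_lt_of_le (hμnn s) with h | h
    · rw [← h]; ring
    · have : et s = e s := by rw [het]; simp [h]
      have he0 : e s = 0 := by rw [← this, het_zero s]
      rw [show vh s - v s = e s from rfl, he0]
      ring
  -- uniqueness forces θtil = θstar
  obtain ⟨θ₀, -, huniq⟩ := hzero π
  have h1 : θtil = θ₀ := huniq θtil htil_zero
  have h2 : θstar = θ₀ := huniq θstar hstar
  rw [hvh, hvs] at *
  rw [h1, h2]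
end

section
/- Let P be an n×n row-stochastic matrix with stationary distribution μ ∈ ℝⁿ whose entries are all strictly positive, let γ ∈ [0,1), let r ∈ ℝⁿ, let V ⊆ ℝⁿ be a linear subspace, and let Π : ℝⁿ → V be the orthogonal projection onto V with respect to the inner product ⟨u,v⟩_μ = ∑_i μ_i u_i v_i. Then the map T : ℝⁿ → ℝⁿ defined by T(v) = Π(r + γ·Pv) satisfies ‖T(v) − T(w)‖_μ ≤ γ·‖v − w‖_μ for all v, w ∈ ℝⁿ, where ‖v‖_μ = (∑_i μ_i v_i²)^{1/2}. -/
open Matrix BigOperators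

theorem projected_bellman_operator_contraction
    (n : ℕ) (P : Matrix (Fin n) (Fin n) ℝ) (μ : Fin n → ℝ) (γ : ℝ) (r : Fin n → ℝ)
    (V : Submodule ℝ (Fin n → ℝ)) (proj : (Fin n → ℝ) → (Fin n → ℝ))
    (hP_nonneg : ∀ i j, 0 ≤ P i j)
    (hP_row : ∀ i, ∑ j, P i j = 1)
    (hμ_pos : ∀ i, 0 < μ i)
    (hμ_sum : ∑ i, μ i = 1)
    (hμ_stat : ∀ j, ∑ i, μ i * P i j = μ j)
    (hγ0 : 0 ≤ γ) (hγ1 : γ < 1)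
    -- proj is the orthogonal projection onto V w.r.t. ⟨u,v⟩_μ = Σ_i μ_i u_i v_i:
    (hproj_mem : ∀ v, proj v ∈ V)
    (hproj_orth : ∀ v, ∀ w ∈ V, ∑ i, μ i * (v i - proj v i) * w i = 0) :
    ∀ v w : Fin n → ℝ,
      Real.sqrt (∑ i, μ i *
          (proj (r + γ • (P *ᵥ v)) i - proj (r + γ • (P *ᵥ w)) i) ^ 2)
        ≤ γ * Real.sqrt (∑ i, μ i * (v i - w i) ^ 2) := by
  intro v w
  set u₁ : Fin n → ℝ := r + γ • (P *ᵥ v) with hu₁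
  set u₂ : Fin n → ℝ := r + γ • (P *ᵥ w) with hu₂
  set p : Fin n → ℝ := proj u₁ - proj u₂ with hp
  have hpapp : ∀ i, p i = proj u₁ i - proj u₂ i := fun i => rfl
  have hpV : p ∈ V := V.sub_mem (hproj_mem u₁) (hproj_mem u₂)
  set x : Fin n → ℝ := fun i => v i - w i with hx
  -- d = u₁ - u₂ = γ • P x
  have hd : ∀ i, u₁ i - u₂ i = γ * ∑ j, P i j * x j := by
    intro i
    simp only [hu₁, hu₂, Pi.add_apply, Pi.smul_apply, smul_eq_mul, mulVec, dotProduct]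
    have hsub : ∑ j, P i j * x j = (∑ j, P i j * v j) - ∑ j, P i j * w j := by
      rw [← Finset.sum_sub_distrib]
      exact Finset.sum_congr rfl fun j _ => by rw [hx]; ring
    rw [hsub]; ring
  set A := ∑ i, μ i * p i ^ 2 with hA
  set B := ∑ i, μ i * (γ * ∑ j, P i j * x j) ^ 2 with hB
  set C := ∑ i, μ i * x i ^ 2 with hC
  have hAnn : 0 ≤ A := Finset.sum_nonneg fun i _ =>
    mul_nonneg (hμ_pos i).le (sq_nonneg _)
  have hBnn : 0 ≤ B := Finset.sum_nonneg fun i _ =>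
    mul_nonneg (hμ_pos i).le (sq_nonneg _)
  have hCnn : 0 ≤ C := Finset.sum_nonneg fun i _ =>
    mul_nonneg (hμ_pos i).le (sq_nonneg _)
  -- Step 1: A = ∑ μ (u₁-u₂) p
  have h1 : A = ∑ i, μ i * (u₁ i - u₂ i) * p i := by
    have o1 := hproj_orth u₁ p hpV
    have o2 := hproj_orth u₂ p hpV
    have : ∑ i, (μ i * (u₁ i - proj u₁ i) * p i - μ i * (u₂ i - proj u₂ i) * p i) = 0 := by
      rw [Finset.sum_sub_distrib, o1, o2]; ring
    have h2 : ∑ i, (μ i * (u₁ i - u₂ i) * p i - μ i * p i ^ 2) = 0 := by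
      rw [← this]
      apply Finset.sum_congr rfl
      intro i _
      rw [hpapp i]; ring
    rw [Finset.sum_sub_distrib] at h2
    rw [hA]; linarith
  -- Step 2: Cauchy–Schwarz: A^2 ≤ B * A
  have h2 : A ^ 2 ≤ B * A := by
    have cs := Finset.sum_mul_sq_le_sq_mul_sq Finset.univ
      (fun i => Real.sqrt (μ i) * (u₁ i - u₂ i)) (fun i => Real.sqrt (μ i) * p i)
    have e1 : ∀ i : Fin n, (Real.sqrt (μ i) * (u₁ i - u₂ i)) * (Real.sqrt (μ i) * p i)
        = μ i * (u₁ i - u₂ i) * p i := by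
      intro i
      have h : Real.sqrt (μ i) * Real.sqrt (μ i) = μ i := Real.mul_self_sqrt (hμ_pos i).le
      linear_combination ((u₁ i - u₂ i) * p i) * h
    have e2 : ∀ i : Fin n, (Real.sqrt (μ i) * (u₁ i - u₂ i)) ^ 2
        = μ i * (γ * ∑ j, P i j * x j) ^ 2 := by
      intro i
      rw [mul_pow, Real.sq_sqrt (hμ_pos i).le, hd i]
    have e3 : ∀ i : Fin n, (Real.sqrt (μ i) * p i) ^ 2 = μ i * p i ^ 2 := by
      intro i
      rw [mul_pow, Real.sq_sqrt (hμ_pos i).le]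
    calc A ^ 2
        = (∑ i, μ i * (u₁ i - u₂ i) * p i) ^ 2 := by rw [h1]
      _ = (∑ i, (Real.sqrt (μ i) * (u₁ i - u₂ i)) * (Real.sqrt (μ i) * p i)) ^ 2 := by
          congr 1; exact (Finset.sum_congr rfl fun i _ => e1 i).symm
      _ ≤ (∑ i, (Real.sqrt (μ i) * (u₁ i - u₂ i)) ^ 2) * ∑ i, (Real.sqrt (μ i) * p i) ^ 2 := cs
      _ = B * A := by
          rw [hB, hA]
          congr 1
          · exact Finset.sum_congr rfl fun i _ => e2 i
          · exact Finset.sum_congr rfl fun i _ => e3 i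
  -- Step 3: A ≤ B
  have hAB : A ≤ B := by
    rcases eq_or_lt_of_le hAnn with h0 | h0
    · rw [← h0]; exact hBnn
    · nlinarith
  -- Step 4: B ≤ γ^2 * C (Jensen + stationarity)
  have hBC : B ≤ γ ^ 2 * C := by
    have jensen : ∀ i : Fin n, (∑ j, P i j * x j) ^ 2 ≤ ∑ j, P i j * x j ^ 2 := by
      intro i
      have cs := Finset.sum_mul_sq_le_sq_mul_sq Finset.univ
        (fun j => Real.sqrt (P i j)) (fun j => Real.sqrt (P i j) * x j)
      have e1 : ∀ j : Fin n, Real.sqrt (P i j) * (Real.sqrt (P i j) * x j) = P i j * x j := by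
        intro j
        rw [← mul_assoc, Real.mul_self_sqrt (hP_nonneg i j)]
      have e2 : ∀ j : Fin n, (Real.sqrt (P i j)) ^ 2 = P i j := fun j =>
        Real.sq_sqrt (hP_nonneg i j)
      have e3 : ∀ j : Fin n, (Real.sqrt (P i j) * x j) ^ 2 = P i j * x j ^ 2 := by
        intro j
        rw [mul_pow, Real.sq_sqrt (hP_nonneg i j)]
      calc (∑ j, P i j * x j) ^ 2
          = (∑ j, Real.sqrt (P i j) * (Real.sqrt (P i j) * x j)) ^ 2 := by
            congr 1; exact (Finset.sum_congr rfl fun j _ => e1 j).symm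
        _ ≤ (∑ j, (Real.sqrt (P i j)) ^ 2) * ∑ j, (Real.sqrt (P i j) * x j) ^ 2 := cs
        _ = (∑ j, P i j) * ∑ j, P i j * x j ^ 2 := by
            congr 1
            · exact Finset.sum_congr rfl fun j _ => e2 j
            · exact Finset.sum_congr rfl fun j _ => e3 j
        _ = ∑ j, P i j * x j ^ 2 := by rw [hP_row i, one_mul]
    calc B = ∑ i, γ ^ 2 * (μ i * (∑ j, P i j * x j) ^ 2) := by
            rw [hB]; apply Finset.sum_congr rfl; intro i _; ring
      _ ≤ ∑ i, γ ^ 2 * (μ i * ∑ j, P i j * x j ^ 2) := by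
            apply Finset.sum_le_sum
            intro i _
            exact mul_le_mul_of_nonneg_left
              (mul_le_mul_of_nonneg_left (jensen i) (hμ_pos i).le) (sq_nonneg γ)
      _ = γ ^ 2 * ∑ j, (∑ i, μ i * P i j) * x j ^ 2 := by
            rw [← Finset.mul_sum]
            congr 1
            calc ∑ i, μ i * ∑ j, P i j * x j ^ 2
                = ∑ i, ∑ j, μ i * P i j * x j ^ 2 := by
                  apply Finset.sum_congr rfl
                  intro i _
                  rw [Finset.mul_sum]
                  exact Finset.sum_congr rfl fun j _ => by ring
              _ = ∑ j, ∑ i, μ i * P i j * x j ^ 2 := Finset.sum_comm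
              _ = ∑ j, (∑ i, μ i * P i j) * x j ^ 2 := by
                  exact Finset.sum_congr rfl fun j _ => (Finset.sum_mul ..).symm
      _ = γ ^ 2 * C := by
            rw [hC]
            congr 1
            exact Finset.sum_congr rfl fun j _ => by rw [hμ_stat j]
  -- Conclusion
  have hfinal : A ≤ γ ^ 2 * C := le_trans hAB hBC
  have goal_eq : (∑ i, μ i * (proj u₁ i - proj u₂ i) ^ 2) = A := by
    rw [hA]
    exact Finset.sum_congr rfl fun i _ => by rw [hpapp i]
  rw [goal_eq]
  calc Real.sqrt A ≤ Real.sqrt (γ ^ 2 * C) := Real.sqrt_le_sqrt hfinal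
    _ = γ * Real.sqrt C := by
        rw [Real.sqrt_mul (sq_nonneg γ), Real.sqrt_sq hγ0]
end

section
/- Let P be an n×n row-stochastic matrix with stationary distribution μ ∈ ℝⁿ whose entries are all strictly positive, let γ ∈ [0,1), let r ∈ ℝⁿ, let V ⊆ ℝⁿ be a linear subspace, and let Π : ℝⁿ → V be the orthogonal projection onto V with respect to the inner product ⟨u,v⟩_μ = ∑_i μ_i u_i v_i. Then the map T(v) = Π(r + γ·Pv) has exactly one fixed point in ℝⁿ, and this fixed point lies in V. -/
open Matrix BigOperators

theorem projected_bellman_operator_unique_fixed_point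
    (n : ℕ) (P : Matrix (Fin n) (Fin n) ℝ) (μ : Fin n → ℝ) (γ : ℝ) (r : Fin n → ℝ)
    (V : Submodule ℝ (Fin n → ℝ)) (proj : (Fin n → ℝ) → (Fin n → ℝ))
    (hP_nonneg : ∀ i j, 0 ≤ P i j)
    (hP_row : ∀ i, ∑ j, P i j = 1)
    (hμ_pos : ∀ i, 0 < μ i)
    (hμ_sum : ∑ i, μ i = 1)
    (hμ_stat : ∀ j, ∑ i, μ i * P i j = μ j)
    (hγ0 : 0 ≤ γ) (hγ1 : γ < 1)
    -- proj is the orthogonal projection onto V w.r.t. ⟨u,v⟩_μ = Σ_i μ_i u_i v_i: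
    (hproj_mem : ∀ v, proj v ∈ V)
    (hproj_orth : ∀ v, ∀ w ∈ V, ∑ i, μ i * (v i - proj v i) * w i = 0) :
    (∃! v : Fin n → ℝ, proj (r + γ • (P *ᵥ v)) = v) ∧
    (∀ v : Fin n → ℝ, proj (r + γ • (P *ᵥ v)) = v → v ∈ V) := by
  classical
  -- the μ-weighted quadratic form
  set N : (Fin n → ℝ) → ℝ := fun v => ∑ i, μ i * v i * v i with hN
  have N_nonneg : ∀ v, 0 ≤ N v := by
    intro v
    apply Finset.sum_nonneg
    intro i _
    nlinarith [(hμ_pos i).le, sq_nonneg (v i)]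
  have N_eq_zero : ∀ v, N v = 0 → v = 0 := by
    intro v hv
    funext i
    have hterm : ∀ j ∈ Finset.univ, (0:ℝ) ≤ μ j * v j * v j := by
      intro j _
      nlinarith [(hμ_pos j).le, sq_nonneg (v j)]
    have h := (Finset.sum_eq_zero_iff_of_nonneg hterm).mp hv i (Finset.mem_univ i)
    have hpos := hμ_pos i
    have h2 : v i * v i = 0 := by nlinarith
    simpa using mul_self_eq_zero.mp h2
  -- uniqueness of the orthogonal projection
  have proj_unique : ∀ v w, w ∈ V →
      (∀ x ∈ V, ∑ i, μ i * (v i - w i) * x i = 0) → w = proj v := by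
    intro v w hw horth
    have hd : proj v - w ∈ V := V.sub_mem (hproj_mem v) hw
    have h1 := horth _ hd
    have h2 := hproj_orth v _ hd
    have h3 : N (proj v - w) = 0 := by
      have expand : ∀ i, μ i * (proj v - w) i * (proj v - w) i
          = μ i * (v i - w i) * (proj v - w) i
            - μ i * (v i - proj v i) * (proj v - w) i := by
        intro i; simp only [Pi.sub_apply]; ring
      calc N (proj v - w) = ∑ i, (μ i * (v i - w i) * (proj v - w) i
            - μ i * (v i - proj v i) * (proj v - w) i) := by
              simp only [hN]; exact Finset.sum_congr rfl (fun i _ => expand i)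
        _ = (∑ i, μ i * (v i - w i) * (proj v - w) i)
            - ∑ i, μ i * (v i - proj v i) * (proj v - w) i := Finset.sum_sub_distrib _ _
        _ = 0 := by rw [h1, h2]; ring
    exact (sub_eq_zero.mp (N_eq_zero _ h3)).symm
  -- proj is additive and homogeneous
  have proj_add : ∀ u v, proj (u + v) = proj u + proj v := by
    intro u v
    refine (proj_unique (u + v) (proj u + proj v)
      (V.add_mem (hproj_mem u) (hproj_mem v)) ?_).symm
    intro x hx
    have h1 := hproj_orth u x hx
    have h2 := hproj_orth v x hx
    calc ∑ i, μ i * ((u + v) i - (proj u + proj v) i) * x i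
        = ∑ i, (μ i * (u i - proj u i) * x i + μ i * (v i - proj v i) * x i) := by
          refine Finset.sum_congr rfl (fun i _ => ?_)
          simp only [Pi.add_apply]; ring
      _ = (∑ i, μ i * (u i - proj u i) * x i) + ∑ i, μ i * (v i - proj v i) * x i :=
          Finset.sum_add_distrib
      _ = 0 := by rw [h1, h2]; ring
  have proj_smul : ∀ (c : ℝ) v, proj (c • v) = c • proj v := by
    intro c v
    refine (proj_unique (c • v) (c • proj v) (V.smul_mem c (hproj_mem v)) ?_).symm
    intro x hx
    have h1 := hproj_orth v x hx
    calc ∑ i, μ i * ((c • v) i - (c • proj v) i) * x i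
        = ∑ i, c * (μ i * (v i - proj v i) * x i) := by
          refine Finset.sum_congr rfl (fun i _ => ?_)
          simp only [Pi.smul_apply, smul_eq_mul]; ring
      _ = c * ∑ i, μ i * (v i - proj v i) * x i := (Finset.mul_sum _ _ _).symm
      _ = 0 := by rw [h1]; ring
  -- the linear part of the operator
  set L : (Fin n → ℝ) →ₗ[ℝ] (Fin n → ℝ) :=
    { toFun := fun v => proj (γ • (P *ᵥ v))
      map_add' := by
        intro u v
        show proj (γ • (P *ᵥ (u + v))) = proj (γ • (P *ᵥ u)) + proj (γ • (P *ᵥ v))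
        rw [Matrix.mulVec_add, smul_add, proj_add]
      map_smul' := by
        intro c v
        show proj (γ • (P *ᵥ (c • v))) = c • proj (γ • (P *ᵥ v))
        rw [Matrix.mulVec_smul, smul_comm, proj_smul] } with hLdef
  have hL : ∀ v, L v = proj (γ • (P *ᵥ v)) := fun v => rfl
  -- N is nonincreasing under proj
  have N_proj_le : ∀ x, N (proj x) ≤ N x := by
    intro x
    have h := hproj_orth x (proj x) (hproj_mem x)
    have hnn := N_nonneg (x - proj x)
    have expand : N x = N (x - proj x) + 2 * (∑ i, μ i * (x i - proj x i) * proj x i)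
        + N (proj x) := by
      simp only [hN, Pi.sub_apply]
      rw [Finset.mul_sum, ← Finset.sum_add_distrib, ← Finset.sum_add_distrib]
      refine Finset.sum_congr rfl (fun i _ => ?_)
      ring
    rw [h] at expand
    linarith
  -- N is nonincreasing under P
  have N_P_le : ∀ v, N (P *ᵥ v) ≤ N v := by
    intro v
    have key : ∀ i, (P *ᵥ v) i * (P *ᵥ v) i ≤ ∑ j, P i j * (v j * v j) := by
      intro i
      have hcs := Finset.sum_mul_sq_le_sq_mul_sq Finset.univ
        (fun j => Real.sqrt (P i j)) (fun j => Real.sqrt (P i j) * v j)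
      have e1 : ∀ j, Real.sqrt (P i j) * (Real.sqrt (P i j) * v j) = P i j * v j := by
        intro j
        rw [← mul_assoc, Real.mul_self_sqrt (hP_nonneg i j)]
      have e2 : ∀ j, Real.sqrt (P i j) ^ 2 = P i j := fun j =>
        Real.sq_sqrt (hP_nonneg i j)
      have e3 : ∀ j, (Real.sqrt (P i j) * v j) ^ 2 = P i j * (v j * v j) := by
        intro j
        rw [mul_pow, e2]; ring
      simp only [e1] at hcs
      rw [Finset.sum_congr rfl (fun j _ => e2 j),
          Finset.sum_congr rfl (fun j _ => e3 j), hP_row i, one_mul] at hcs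
      have hm : (P *ᵥ v) i = ∑ j, P i j * v j := by
        simp [Matrix.mulVec, dotProduct]
      rw [hm]
      calc (∑ j, P i j * v j) * (∑ j, P i j * v j)
          = (∑ j, P i j * v j) ^ 2 := (sq _).symm
        _ ≤ ∑ j, P i j * (v j * v j) := hcs
    calc N (P *ᵥ v) = ∑ i, μ i * ((P *ᵥ v) i * (P *ᵥ v) i) := by
          simp only [hN]; exact Finset.sum_congr rfl (fun i _ => by ring)
      _ ≤ ∑ i, μ i * ∑ j, P i j * (v j * v j) := by
          refine Finset.sum_le_sum (fun i _ => ?_)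
          exact mul_le_mul_of_nonneg_left (key i) (hμ_pos i).le
      _ = ∑ i, ∑ j, μ i * P i j * (v j * v j) := by
          refine Finset.sum_congr rfl (fun i _ => ?_)
          rw [Finset.mul_sum]
          exact Finset.sum_congr rfl (fun j _ => by ring)
      _ = ∑ j, ∑ i, μ i * P i j * (v j * v j) := Finset.sum_comm
      _ = ∑ j, (∑ i, μ i * P i j) * (v j * v j) := by
          refine Finset.sum_congr rfl (fun j _ => ?_)
          rw [Finset.sum_mul]
      _ = N v := by
          simp only [hN]
          refine Finset.sum_congr rfl (fun j _ => ?_)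
          rw [hμ_stat j]; ring
  -- N scales quadratically
  have N_smul : ∀ (c : ℝ) v, N (c • v) = c ^ 2 * N v := by
    intro c v
    simp only [hN, Pi.smul_apply, smul_eq_mul, Finset.mul_sum]
    exact Finset.sum_congr rfl (fun i _ => by ring)
  -- 1 - L is injective
  set M : (Fin n → ℝ) →ₗ[ℝ] (Fin n → ℝ) := LinearMap.id - L with hM
  have hinj : Function.Injective M := by
    rw [← LinearMap.ker_eq_bot, LinearMap.ker_eq_bot']
    intro v hv
    have hv' : v = L v := by
      have h2 : v - L v = 0 := by
        simpa [hM, LinearMap.sub_apply] using hv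
      exact sub_eq_zero.mp h2

    have c1 : N v ≤ γ ^ 2 * N v := by
      calc N v = N (proj (γ • (P *ᵥ v))) := by conv_lhs => rw [hv', hL]
        _ ≤ N (γ • (P *ᵥ v)) := N_proj_le _
        _ = γ ^ 2 * N (P *ᵥ v) := N_smul _ _
        _ ≤ γ ^ 2 * N v := by
            exact mul_le_mul_of_nonneg_left (N_P_le v) (sq_nonneg γ)
    have hsq : γ ^ 2 < 1 := by nlinarith
    have hN0 : N v = 0 := by nlinarith [c1, hsq, N_nonneg v]
    exact N_eq_zero v hN0
  have hsurj : Function.Surjective M :=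
    LinearMap.surjective_of_injective hinj
  -- the fixed point equation
  have hT : ∀ v, proj (r + γ • (P *ᵥ v)) = proj r + L v := by
    intro v
    rw [proj_add, hL]
  have hiff : ∀ v, proj (r + γ • (P *ᵥ v)) = v ↔ M v = proj r := by
    intro v
    rw [hT]
    constructor
    · intro h
      simp only [hM, LinearMap.sub_apply, LinearMap.id_apply]
      rw [sub_eq_iff_eq_add]
      exact h.symm
    · intro h
      simp only [hM, LinearMap.sub_apply, LinearMap.id_apply] at h
      rw [← h]; abel
  obtain ⟨v0, hv0⟩ := hsurj (proj r)
  constructor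
  · refine ⟨v0, (hiff v0).mpr hv0, ?_⟩
    intro y hy
    exact hinj (((hiff y).mp hy).trans hv0.symm)
  · intro v hv
    rw [← hv]
    exact hproj_mem _
end
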